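/- arXiv:1102.4107 — 2 statements merged into one kernel-verified Lean document; each statement's English description precedes it below -/
import Mathlib

section
/- For every M there exists N such that for all even n ≥ N, there are at least M partitions of n, all corresponding to even permutations, having the same centralizer size in S_n. -/
open Nat

/-- The order of the centralizer in `S n` of a permutation of cycle type `λ`:
`∏ i, i ^ (m_i λ) * (m_i λ)!`. -/
def centralizerSize {n : ℕ} (lam : Nat.Partition n) : ℕ :=
  ∏ i ∈ lam.parts.toFinset, i ^ (lam.parts.count i) * (lam.parts.count i)!

/-- A partition is even if permutations of that cycle type are even,
i.e. `n - (number of parts)` is even. -/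
def Nat.Partition.IsEven {n : ℕ} (lam : Nat.Partition n) : Prop :=
  Even (n - Multiset.card lam.parts)

namespace ManyEven

/-- scaled block: either `t•{2,8,9}` or `t•{3,4,12}`; same sum `19t`, same
product `144t³`, same cardinality `3`. -/
def blkt (t : ℕ) (b : Bool) : Multiset ℕ :=
  if b then {2 * t, 8 * t, 9 * t} else {3 * t, 4 * t, 12 * t}

lemma blkt_sum (t b) : (blkt t b).sum = 19 * t := by
  cases b <;> simp [blkt] <;> ring

lemma blkt_prod (t b) : (blkt t b).prod = 144 * t ^ 3 := by
  cases b <;> simp [blkt] <;> ring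

lemma blkt_card (t b) : Multiset.card (blkt t b) = 3 := by
  cases b <;> simp [blkt]

lemma blkt_mem_bounds {t b x} (ht : 1 ≤ t) (h : x ∈ blkt t b) :
    t < x ∧ x < 13 * t := by
  cases b <;> simp [blkt] at h <;> omega

lemma blkt_nodup {t b} (ht : 1 ≤ t) : (blkt t b).Nodup := by
  cases b <;> simp [blkt] <;> omega

def blk (i : ℕ) (b : Bool) : Multiset ℕ := blkt (13 ^ (i + 1)) b

lemma pow13_pos (i : ℕ) : 1 ≤ 13 ^ i := Nat.one_le_pow _ _ (by norm_num)

lemma blk_mem_bounds {i b x} (h : x ∈ blk i b) :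
    13 ^ (i + 1) < x ∧ x < 13 ^ (i + 2) := by
  have := blkt_mem_bounds (pow13_pos (i + 1)) h
  have h2 : (13:ℕ) ^ (i + 2) = 13 * 13 ^ (i + 1) := by ring
  omega

def Q (M j : ℕ) : Multiset ℕ := ∑ i ∈ Finset.range M, blk i (decide (j ≤ i))

def S (M : ℕ) : ℕ := ∑ i ∈ Finset.range M, 19 * 13 ^ (i + 1)

lemma Q_sum (M j) : (Q M j).sum = S M := by
  rw [Q, Multiset.sum_sum, S]
  exact Finset.sum_congr rfl fun i _ => blkt_sum _ _

lemma Q_prod (M j) : (Q M j).prod = ∏ i ∈ Finset.range M, (144 * (13 ^ (i + 1)) ^ 3) := by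
  rw [Q, Multiset.prod_sum]
  exact Finset.prod_congr rfl fun i _ => blkt_prod _ _

lemma card_finsum (s : Finset ℕ) (f : ℕ → Multiset ℕ) :
    Multiset.card (∑ i ∈ s, f i) = ∑ i ∈ s, Multiset.card (f i) := by
  induction s using Finset.cons_induction with
  | empty => simp
  | cons a s has ih => rw [Finset.sum_cons, Finset.sum_cons, Multiset.card_add, ih]

lemma Q_card (M j) : Multiset.card (Q M j) = 3 * M := by
  rw [Q, card_finsum]
  simp [blkt_card, blk, mul_comm]

lemma Q_mem_bounds {M j x} (h : x ∈ Q M j) :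
    ∃ i < M, 13 ^ (i + 1) < x ∧ x < 13 ^ (i + 2) := by
  rw [Q, Multiset.mem_sum] at h
  obtain ⟨i, hi, hx⟩ := h
  exact ⟨i, Finset.mem_range.mp hi, blk_mem_bounds hx⟩

lemma Q_one_lt {M j x} (h : x ∈ Q M j) : 1 < x := by
  obtain ⟨i, _, h1, _⟩ := Q_mem_bounds h
  have := pow13_pos (i + 1)
  omega

lemma Q_nodup (M j) : (Q M j).Nodup := by
  induction M with
  | zero => simp [Q]
  | succ M ih =>
    rw [Q, Finset.sum_range_succ, Multiset.nodup_add]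
    refine ⟨ih, blkt_nodup (pow13_pos _), ?_⟩
    rw [Multiset.disjoint_left]
    intro x hxQ hxb
    obtain ⟨i, hi, _, h2⟩ := Q_mem_bounds hxQ
    have h3 := (blk_mem_bounds hxb).1
    have : (13:ℕ) ^ (i + 2) ≤ 13 ^ (M + 1) :=
      Nat.pow_le_pow_right (by norm_num) (by omega)
    omega

lemma Sspec (M : ℕ) : ∃ m, S M = 3 * M + 2 * m := by
  induction M with
  | zero => exact ⟨0, by simp [S]⟩
  | succ M ih =>
    obtain ⟨m, hm⟩ := ih
    have hodd : Odd (19 * 13 ^ (M + 1)) :=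
      Odd.mul ⟨9, by norm_num⟩ (Odd.pow ⟨6, by norm_num⟩)
    obtain ⟨t, ht⟩ := hodd
    have h19 : 19 ≤ 19 * 13 ^ (M + 1) :=
      Nat.le_mul_of_pos_right _ (Nat.pos_of_ne_zero (by positivity))
    have hS : S (M + 1) = S M + 19 * 13 ^ (M + 1) := Finset.sum_range_succ _ _
    exact ⟨m + t - 1, by omega⟩

/-- the parts multiset of our partitions. -/
def Pm (M n j : ℕ) : Multiset ℕ := Multiset.replicate (n - S M) 1 + Q M j

def Ppart (M n j : ℕ) (h : S M ≤ n) : Nat.Partition n where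
  parts := Pm M n j
  parts_pos := by
    intro x hx
    rw [Pm, Multiset.mem_add] at hx
    rcases hx with hx | hx
    · rw [Multiset.eq_of_mem_replicate hx]; norm_num
    · have := Q_one_lt hx; omega
  parts_sum := by
    rw [Pm, Multiset.sum_add, Multiset.sum_replicate, Q_sum, smul_eq_mul, mul_one]
    omega

lemma one_not_mem_Q (M j : ℕ) : (1:ℕ) ∉ Q M j := fun h => by
  have := Q_one_lt h; omega

lemma centralizer_calc {n : ℕ} (lam : Nat.Partition n) (r : ℕ) (q : Multiset ℕ)
    (hl : lam.parts = Multiset.replicate r 1 + q) (hr : r ≠ 0) (hq : q.Nodup)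
    (h1 : (1:ℕ) ∉ q) :
    centralizerSize lam = r ! * q.prod := by
  have hc1 : (Multiset.replicate r 1 + q).count 1 = r := by
    rw [Multiset.count_add, Multiset.count_replicate, if_pos rfl,
      Multiset.count_eq_zero.mpr h1]
    omega
  have hcx : ∀ x ∈ q.toFinset, (Multiset.replicate r 1 + q).count x = 1 := by
    intro x hx
    rw [Multiset.mem_toFinset] at hx
    have hx1 : x ≠ 1 := fun h => h1 (h ▸ hx)
    rw [Multiset.count_add, Multiset.count_replicate, if_neg (fun h => hx1 h.symm),
      Multiset.count_eq_one_of_mem hq hx]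
  have htf : (Multiset.replicate r 1 + q).toFinset = insert 1 q.toFinset := by
    rw [Multiset.toFinset_add, Multiset.toFinset_replicate, if_neg hr,
      ← Finset.insert_eq]
  rw [centralizerSize, hl, htf, Finset.prod_insert (by simp [h1]), hc1, one_pow, one_mul]
  congr 1
  rw [Finset.prod_congr rfl (fun x hx => by rw [hcx x hx, pow_one, Nat.factorial_one, mul_one])]
  rw [Finset.prod_eq_multiset_prod]
  simp
  rw [Multiset.dedup_eq_self.mpr hq]

end ManyEven

open ManyEven in
theorem many_even_partitions_same_centralizer_size (M : ℕ) :
    ∃ N : ℕ, ∀ n : ℕ, N ≤ n → Even n →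
      ∃ c : ℕ, M ≤ Nat.card {lam : Nat.Partition n //
        lam.IsEven ∧ centralizerSize lam = c} := by
  refine ⟨S M + 1, fun n hn _ => ?_⟩
  have hS : S M ≤ n := by omega
  have hr : n - S M ≠ 0 := by omega
  obtain ⟨m, hm⟩ := Sspec M
  refine ⟨(n - S M)! * ∏ i ∈ Finset.range M, (144 * (13 ^ (i + 1)) ^ 3), ?_⟩
  have key : ∀ j : Fin M,
      (Ppart M n j hS).IsEven ∧ centralizerSize (Ppart M n j hS)
        = (n - S M)! * ∏ i ∈ Finset.range M, (144 * (13 ^ (i + 1)) ^ 3) := by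
    intro j
    constructor
    · rw [Nat.Partition.IsEven]
      have hcard : Multiset.card (Ppart M n j hS).parts = (n - S M) + 3 * M := by
        show Multiset.card (Pm M n (j:ℕ)) = _
        rw [Pm, Multiset.card_add, Multiset.card_replicate, Q_card]
      rw [hcard]
      exact ⟨m, by omega⟩
    · rw [centralizer_calc _ (n - S M) (Q M j) rfl hr (Q_nodup M j) (one_not_mem_Q M j),
        Q_prod]
  have hinj : Function.Injective (fun j : Fin M =>
      (⟨Ppart M n j hS, key j⟩ : {lam : Nat.Partition n //
        lam.IsEven ∧ centralizerSize lam = _})) := by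
    have main : ∀ j1 j2 : ℕ, j1 < M → j1 < j2 → Pm M n j1 ≠ Pm M n j2 := by
      intro j1 j2 hj1 hlt hparts
      have hmem : (2 * 13 ^ (j1 + 1)) ∈ Pm M n j1 := by
        rw [Pm, Multiset.mem_add]
        right
        rw [Q, Multiset.mem_sum]
        refine ⟨j1, Finset.mem_range.mpr hj1, ?_⟩
        rw [decide_eq_true (le_refl j1), blk, blkt]
        simp
      rw [hparts] at hmem
      rw [Pm, Multiset.mem_add] at hmem
      have ht1 : 1 ≤ 13 ^ (j1 + 1) := pow13_pos _
      rcases hmem with hmem | hmem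
      · have := Multiset.eq_of_mem_replicate hmem; omega
      · rw [Q, Multiset.mem_sum] at hmem
        obtain ⟨i, hi, hx⟩ := hmem
        have hb := blk_mem_bounds hx
        have hieq : i = j1 := by
          rcases lt_trichotomy i j1 with h | h | h
          · have : (13:ℕ) ^ (i + 2) ≤ 13 ^ (j1 + 1) :=
              Nat.pow_le_pow_right (by norm_num) (by omega)
            omega
          · exact h
          · have : (13:ℕ) ^ (j1 + 2) ≤ 13 ^ (i + 1) :=
              Nat.pow_le_pow_right (by norm_num) (by omega)
            have h2 : (13:ℕ) ^ (j1 + 2) = 13 * 13 ^ (j1 + 1) := by ring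
            omega
        subst hieq
        rw [decide_eq_false (by omega : ¬ j2 ≤ i), blk, blkt] at hx
        simp at hx
    intro j1 j2 hj
    have hparts : Pm M n (j1:ℕ) = Pm M n (j2:ℕ) := congrArg (fun x => x.1.parts) hj
    by_contra hne
    rcases lt_trichotomy (j1:ℕ) (j2:ℕ) with h | h | h
    · exact main _ _ j1.2 h hparts
    · exact hne (Fin.ext h)
    · exact main _ _ j2.2 h hparts.symm
  calc M = Nat.card (Fin M) := (Nat.card_eq_fintype_card.trans (Fintype.card_fin M)).symm
    _ ≤ _ := Nat.card_le_card_of_injective _ hinj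
end

section
/- For any constant a > 1 and any fixed positive integer n, the quantity a^{k/n} / ((k+1) · d(k!)) tends to infinity as k → ∞, where d(k!) is the number of positive divisors of k!. -/
open Filter Nat
open Finset

lemma fac_mul_le (p k : ℕ) (hp : p.Prime) : (p - 1) * (k !).factorization p ≤ k := by
  haveI := Fact.mk hp
  rw [Nat.factorization_def _ hp, sub_one_mul_padicValNat_factorial]
  exact Nat.sub_le _ _

lemma fac_le_self (p k : ℕ) (hp : p.Prime) : (k !).factorization p ≤ k := by
  calc (k !).factorization p ≤ (p - 1) * (k !).factorization p := by
        have := hp.two_le; nlinarith [Nat.sub_le p 1, Nat.le_sub_one_of_lt (lt_of_lt_of_le one_lt_two hp.two_le)]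
      _ ≤ k := fac_mul_le p k hp

lemma fac_le_E (p k E : ℕ) (hp : p.Prime) (h : k < (p - 1) * (E + 1)) :
    (k !).factorization p ≤ E := by
  by_contra hE
  push_neg at hE
  have h1 : (p - 1) * (E + 1) ≤ (p - 1) * (k !).factorization p :=
    Nat.mul_le_mul_left _ hE
  exact absurd (h1.trans (fac_mul_le p k hp)) (by omega)

lemma d_le (k E : ℕ) (hk : k ≠ 0) :
    (k !).divisors.card ≤
      (k + 1) ^ (k / (E + 1) + 2) *
        (E + 1) ^ (((range (k + 1)).filter Nat.Prime).card) := by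
  set F := (range (k + 1)).filter Nat.Prime with hF
  have hsub : (k !).primeFactors ⊆ F := by
    intro p hp
    have hpp : p.Prime := Nat.prime_of_mem_primeFactors hp
    have hdvd : p ∣ k ! := Nat.dvd_of_mem_primeFactors hp
    have : p ≤ k := (Nat.Prime.dvd_factorial hpp).mp hdvd
    simp [hF, Finset.mem_filter, Finset.mem_range, hpp, Nat.lt_succ_of_le this]
  have h1 : (k !).divisors.card = ∏ p ∈ (k !).primeFactors, ((k !).factorization p + 1) :=
    Nat.card_divisors (Nat.factorial_ne_zero k)
  have h2 : ∏ p ∈ (k !).primeFactors, ((k !).factorization p + 1) ≤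
      ∏ p ∈ F, ((k !).factorization p + 1) :=
    Finset.prod_le_prod_of_subset_of_one_le' hsub (fun i _ _ => Nat.succ_le_succ (Nat.zero_le _))
  have h3 : ∏ p ∈ F, ((k !).factorization p + 1) ≤
      ∏ p ∈ F, (if (p - 1) * (E + 1) ≤ k then k + 1 else E + 1) := by
    apply Finset.prod_le_prod'
    intro p hp
    have hpp : p.Prime := (Finset.mem_filter.mp hp).2
    split_ifs with h
    · exact Nat.succ_le_succ (fac_le_self p k hpp)
    · exact Nat.succ_le_succ (fac_le_E p k E hpp (by omega))
  have h4 : ∏ p ∈ F, (if (p - 1) * (E + 1) ≤ k then k + 1 else E + 1) =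
      (k + 1) ^ (F.filter (fun p => (p - 1) * (E + 1) ≤ k)).card *
        (E + 1) ^ (F.filter (fun p => ¬ (p - 1) * (E + 1) ≤ k)).card := by
    rw [← Finset.prod_filter_mul_prod_filter_not F (fun p => (p - 1) * (E + 1) ≤ k)]
    congr 1
    · rw [Finset.prod_congr rfl (fun p hp => if_pos (Finset.mem_filter.mp hp).2),
        Finset.prod_const]
    · rw [Finset.prod_congr rfl (fun p hp => if_neg (Finset.mem_filter.mp hp).2),
        Finset.prod_const]
  have hc1 : (F.filter (fun p => (p - 1) * (E + 1) ≤ k)).card ≤ k / (E + 1) + 2 := by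
    have : F.filter (fun p => (p - 1) * (E + 1) ≤ k) ⊆ range (k / (E + 1) + 2) := by
      intro p hp
      have h := (Finset.mem_filter.mp hp).2
      have : p - 1 ≤ k / (E + 1) := (Nat.le_div_iff_mul_le (Nat.succ_pos E)).mpr h
      exact Finset.mem_range.mpr (by omega)
    simpa using Finset.card_le_card this
  have hc2 : (F.filter (fun p => ¬ (p - 1) * (E + 1) ≤ k)).card ≤ F.card :=
    Finset.card_le_card (Finset.filter_subset _ _)
  calc (k !).divisors.card ≤ (k + 1) ^ (F.filter (fun p => (p - 1) * (E + 1) ≤ k)).card *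
        (E + 1) ^ (F.filter (fun p => ¬ (p - 1) * (E + 1) ≤ k)).card := by
        rw [h1, ← h4]; exact h2.trans h3
    _ ≤ (k + 1) ^ (k / (E + 1) + 2) * (E + 1) ^ F.card :=
        Nat.mul_le_mul (Nat.pow_le_pow_right (by omega) hc1) (Nat.pow_le_pow_right (by omega) hc2)

lemma pi_le (k : ℕ) (hk : 2 ≤ k) :
    ((((range (k + 1)).filter Nat.Prime).card : ℝ)) ≤
      (k.sqrt : ℝ) + 1 + 6 * k / Real.log k := by
  set F := (range (k + 1)).filter Nat.Prime with hF
  set s := k.sqrt with hs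
  have hsplit : (F.filter (fun p => p ≤ s)).card + (F.filter (fun p => ¬ p ≤ s)).card = F.card :=
    Finset.card_filter_add_card_filter_not _
  have hcs : (F.filter (fun p => p ≤ s)).card ≤ s + 1 := by
    have : F.filter (fun p => p ≤ s) ⊆ range (s + 1) := by
      intro p hp
      exact Finset.mem_range.mpr (Nat.lt_succ_of_le (Finset.mem_filter.mp hp).2)
    simpa using Finset.card_le_card this
  set c := (F.filter (fun p => ¬ p ≤ s)).card with hc
  -- natural number inequality
  have hnat : (s + 1) ^ c ≤ 4 ^ k := by
    calc (s + 1) ^ c ≤ ∏ p ∈ F.filter (fun p => ¬ p ≤ s), p :=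
          Finset.pow_card_le_prod _ _ _ (fun p hp => by
            have := (Finset.mem_filter.mp hp).2; omega)
      _ ≤ ∏ p ∈ F, p := Finset.prod_le_prod_of_subset_of_one_le'
            (Finset.filter_subset _ _)
            (fun p hp _ => ((Finset.mem_filter.mp hp).2).one_lt.le)
      _ ≤ 4 ^ k := primorial_le_4_pow k
  -- to reals
  have hlogk : (0:ℝ) < Real.log k := Real.log_pos (by exact_mod_cast hk)
  have hs1 : (1:ℝ) ≤ (s:ℝ) + 1 := by have := Nat.cast_nonneg (α := ℝ) s; linarith
  have hreal : (c : ℝ) * Real.log ((s:ℝ) + 1) ≤ (k : ℝ) * Real.log 4 := by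
    have h := Real.log_le_log (by positivity) (by exact_mod_cast hnat :
      ((s:ℝ) + 1) ^ c ≤ (4:ℝ) ^ k)
    rwa [Real.log_pow, Real.log_pow] at h
  have hlogk2 : Real.log k ≤ 2 * Real.log ((s:ℝ) + 1) := by
    have hk2 : (k : ℝ) ≤ ((s:ℝ) + 1) ^ 2 := by
      have h := Nat.lt_succ_sqrt k
      have : k ≤ (s + 1) * (s + 1) := by
        simp only [hs, Nat.succ_eq_add_one] at h ⊢; omega
      rw [sq]; exact_mod_cast this
    calc Real.log k ≤ Real.log (((s:ℝ) + 1) ^ 2) :=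
          Real.log_le_log (by positivity) hk2
      _ = 2 * Real.log ((s:ℝ) + 1) := by rw [Real.log_pow]; push_cast; ring
  have hlog4 : Real.log 4 ≤ 3 := by
    have := Real.log_le_sub_one_of_pos (show (0:ℝ) < 4 by norm_num)
    linarith
  have hcle : (c : ℝ) ≤ 6 * k / Real.log k := by
    rw [le_div_iff₀ hlogk]
    calc (c : ℝ) * Real.log k ≤ (c : ℝ) * (2 * Real.log ((s:ℝ) + 1)) := by
          apply mul_le_mul_of_nonneg_left hlogk2 (by positivity)
      _ = 2 * ((c : ℝ) * Real.log ((s:ℝ) + 1)) := by ring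
      _ ≤ 2 * ((k : ℝ) * Real.log 4) := by linarith
      _ ≤ 6 * k := by nlinarith [Nat.cast_nonneg (α := ℝ) k]
  have : (F.card : ℝ) ≤ ((s : ℝ) + 1) + c := by
    have : F.card ≤ (s + 1) + c := by omega
    exact_mod_cast this
  linarith

lemma lim_log_div : Tendsto (fun x : ℝ => Real.log x / x) atTop (nhds 0) :=
  Real.isLittleO_log_id_atTop.tendsto_div_nhds_zero

lemma lim_inv_log : Tendsto (fun x : ℝ => 1 / Real.log x) atTop (nhds 0) := by
  have := tendsto_inv_atTop_zero.comp Real.tendsto_log_atTop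
  simpa [Function.comp_def, one_div] using this

lemma lim1 : Tendsto (fun x : ℝ => Real.log (x + 1) / x) atTop (nhds 0) := by
  have h1 : Tendsto (fun x : ℝ => Real.log (x + 1) / (x + 1)) atTop (nhds 0) :=
    lim_log_div.comp (tendsto_atTop_add_const_right _ 1 tendsto_id)
  have h2 : Tendsto (fun x : ℝ => (x + 1) / x) atTop (nhds 1) := by
    have h0 : Tendsto (fun x : ℝ => 1 + x⁻¹) atTop (nhds (1 + 0)) :=
      tendsto_const_nhds.add tendsto_inv_atTop_zero
    have h0' := h0
    rw [add_zero] at h0'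
    apply h0'.congr'
    filter_upwards [eventually_gt_atTop (0:ℝ)] with x hx
    field_simp
  have := h1.mul h2
  rw [zero_mul] at this
  apply this.congr'
  filter_upwards [eventually_gt_atTop (0:ℝ)] with x hx
  have hx1 : x + 1 ≠ 0 := by positivity
  field_simp

lemma lim2 : Tendsto (fun x : ℝ => Real.log (x + 1) / (Real.log x) ^ 2) atTop (nhds 0) := by
  have hu : Tendsto (fun x : ℝ => 1 / Real.log x + (1 / Real.log x) * (1 / Real.log x))
      atTop (nhds (0 + 0 * 0)) := lim_inv_log.add (lim_inv_log.mul lim_inv_log)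
  rw [mul_zero, add_zero] at hu
  apply tendsto_of_tendsto_of_tendsto_of_le_of_le' tendsto_const_nhds hu
  · filter_upwards [eventually_ge_atTop (1:ℝ)] with x hx
    have : (0:ℝ) ≤ Real.log (x + 1) := Real.log_nonneg (by linarith)
    positivity
  · filter_upwards [eventually_ge_atTop (3:ℝ)] with x hx
    have hl1 : (1:ℝ) ≤ Real.log x := by
      rw [show (1:ℝ) = Real.log (Real.exp 1) by simp]
      exact Real.log_le_log (Real.exp_pos 1) (by linarith [Real.exp_one_lt_d9])
    have hlx : (0:ℝ) < Real.log x := by linarith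
    have hup : Real.log (x + 1) ≤ Real.log x + 1 := by
      have h1 : x + 1 ≤ Real.exp 1 * x := by nlinarith [Real.exp_one_gt_d9]
      have h2 : Real.log (x + 1) ≤ Real.log (Real.exp 1 * x) :=
        Real.log_le_log (by linarith) h1
      rw [Real.log_mul (Real.exp_ne_zero 1) (by linarith), Real.log_exp] at h2
      linarith
    calc Real.log (x + 1) / (Real.log x) ^ 2 ≤ (Real.log x + 1) / (Real.log x) ^ 2 := by
          gcongr
      _ = 1 / Real.log x + (1 / Real.log x) * (1 / Real.log x) := by
          rw [one_div_mul_one_div, div_add_div _ _ (ne_of_gt hlx) (by positivity),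
            div_eq_div_iff (by positivity) (by positivity)]
          ring

lemma lim3 : Tendsto (fun x : ℝ => (4 + 2 * Real.log (Real.log x)) / Real.log x)
    atTop (nhds 0) := by
  have g0 : Tendsto (fun y : ℝ => (4 + 2 * Real.log y) / y) atTop (nhds 0) := by
    have : Tendsto (fun y : ℝ => 4 * y⁻¹ + 2 * (Real.log y / y)) atTop (nhds (4 * 0 + 2 * 0)) :=
      (tendsto_inv_atTop_zero.const_mul 4).add (lim_log_div.const_mul 2)
    rw [mul_zero, mul_zero, add_zero] at this
    apply this.congr'
    filter_upwards [eventually_gt_atTop (0:ℝ)] with y hy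
    field_simp
  exact g0.comp Real.tendsto_log_atTop

set_option maxHeartbeats 1000000 in
lemma key (k : ℕ) (hk2 : 2 ≤ k) (hlg : 2 ≤ Real.log k) :
    Real.log ((k:ℝ) + 1) + Real.log (((k ! : ℕ).divisors.card : ℝ)) ≤
      (k:ℝ) * (3 * (Real.log ((k:ℝ) + 1) / k)
        + 4 * (Real.log ((k:ℝ) + 1) / (Real.log k) ^ 2)
        + 9 * ((4 + 2 * Real.log (Real.log k)) / Real.log k)) := by
  have hx : (2:ℝ) ≤ (k:ℝ) := by exact_mod_cast hk2
  have hx0 : (0:ℝ) < (k:ℝ) := by linarith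
  set x := (k:ℝ) with hxdef
  set lg := Real.log x with hlgdef
  have hlg0 : (0:ℝ) < lg := by linarith
  set L := Nat.log 2 k with hLdef
  set E := L ^ 2 with hEdef
  set P := ((range (k + 1)).filter Nat.Prime).card with hPdef
  have hEcast : ((E:ℕ):ℝ) = (L:ℝ)^2 := by rw [hEdef]; push_cast; ring
  have hd0 : 0 < (k !).divisors.card :=
    Finset.card_pos.mpr ⟨k !, Nat.mem_divisors_self _ (Nat.factorial_ne_zero k)⟩
  -- step 1
  have h1 : Real.log (((k !).divisors.card : ℝ)) ≤
      ((k / (E + 1) + 2 : ℕ) : ℝ) * Real.log (x + 1) + (P : ℝ) * Real.log ((E : ℝ) + 1) := by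
    have hle := d_le k E (by omega)
    have hcast := (Nat.cast_le (α := ℝ)).mpr hle
    push_cast at hcast
    have hlog := Real.log_le_log (by exact_mod_cast hd0) hcast
    rwa [Real.log_mul (by positivity) (by positivity), Real.log_pow, Real.log_pow] at hlog
  -- step 2 : cast of nat division
  have h2 : ((k / (E + 1) + 2 : ℕ) : ℝ) ≤ x / ((E:ℝ) + 1) + 2 := by
    push_cast
    have := Nat.cast_div_le (m := k) (n := E + 1) (α := ℝ)
    push_cast at this
    linarith
  -- step 3 : lower bound on L, E
  have hL1 : x < (2:ℝ) ^ (L + 1) := by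
    have h := Nat.lt_pow_succ_log_self (b := 2) (by norm_num) k
    rw [hxdef, hLdef]
    exact_mod_cast h
  have hlog2ub : Real.log 2 < 3/4 := lt_of_lt_of_le Real.log_two_lt_d9 (by norm_num)
  have hlog2lb : (1/2:ℝ) < Real.log 2 := lt_of_le_of_lt (by norm_num) Real.log_two_gt_d9
  have hlt : lg < ((L:ℝ) + 1) * Real.log 2 := by
    calc lg < Real.log ((2:ℝ) ^ (L + 1)) := Real.log_lt_log hx0 hL1
      _ = ((L:ℝ) + 1) * Real.log 2 := by rw [Real.log_pow]; push_cast; ring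
  have hlt' : lg < ((L:ℝ) + 1) * (3/4) := by
    have hL0 : (0:ℝ) ≤ (L:ℝ) + 1 := by positivity
    nlinarith
  have hLlb : lg / 2 ≤ (L:ℝ) := by linarith
  have hE1 : lg ^ 2 / 4 ≤ (E:ℝ) + 1 := by
    have hsq : (lg / 2) ^ 2 ≤ (L:ℝ) ^ 2 := by
      apply pow_le_pow_left₀ (by positivity) hLlb
    rw [hEcast] at *
    nlinarith
  -- step 4 : upper bound on log (E+1)
  have h2L : ((2:ℝ)) ^ L ≤ x := by
    have h := Nat.pow_log_le_self 2 (show k ≠ 0 by omega)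
    rw [hxdef, hLdef]
    exact_mod_cast h
  have hL2 : (L:ℝ) * Real.log 2 ≤ lg := by
    calc (L:ℝ) * Real.log 2 = Real.log ((2:ℝ) ^ L) := by rw [Real.log_pow]
      _ ≤ lg := Real.log_le_log (by positivity) h2L
  have hLub : (L:ℝ) ≤ 2 * lg := by nlinarith [Nat.cast_nonneg (α := ℝ) L]
  have hE2 : (E:ℝ) + 1 ≤ 9 * lg ^ 2 := by
    rw [hEcast]
    nlinarith
  have hlogE : Real.log ((E:ℝ) + 1) ≤ 4 + 2 * Real.log lg := by
    have h9 : Real.log 9 ≤ 4 := by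
      have h3 : Real.log 3 ≤ 2 := by
        have := Real.log_le_sub_one_of_pos (show (0:ℝ) < 3 by norm_num); linarith
      have h9e : Real.log 9 = 2 * Real.log 3 := by
        rw [show (9:ℝ) = 3 ^ 2 by norm_num, Real.log_pow]; push_cast; ring
      linarith
    calc Real.log ((E:ℝ) + 1) ≤ Real.log (9 * lg ^ 2) :=
          Real.log_le_log (by positivity) hE2
      _ = Real.log 9 + 2 * Real.log lg := by
          rw [Real.log_mul (by norm_num) (by positivity), Real.log_pow]; push_cast; ring
      _ ≤ 4 + 2 * Real.log lg := by linarith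
  -- step 5 : bound on P
  have hsqmul : Real.sqrt x * Real.sqrt x = x := Real.mul_self_sqrt (le_of_lt hx0)
  have hsqrt_lg : lg ≤ 2 * Real.sqrt x := by
    have ha : Real.log (Real.sqrt x) ≤ Real.sqrt x - 1 :=
      Real.log_le_sub_one_of_pos (Real.sqrt_pos.mpr hx0)
    have hb : Real.log (Real.sqrt x) = lg / 2 := Real.log_sqrt (le_of_lt hx0)
    linarith
  have hlgx : lg ≤ x := by
    have := Real.log_le_sub_one_of_pos hx0; linarith
  have hkssqrt : ((k.sqrt : ℕ) : ℝ) ≤ Real.sqrt x := by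
    rw [hxdef]
    exact Real.nat_sqrt_le_real_sqrt
  have hP9 : (P : ℝ) ≤ 9 * x / lg := by
    have hPle := pi_le k hk2
    rw [← hPdef, ← hxdef, ← hlgdef] at hPle
    rw [le_div_iff₀ hlg0]
    have hmul : (P:ℝ) * lg ≤ ((k.sqrt:ℝ) + 1 + 6 * x / lg) * lg :=
      mul_le_mul_of_nonneg_right hPle (le_of_lt hlg0)
    have h6 : 6 * x / lg * lg = 6 * x := div_mul_cancel₀ _ (ne_of_gt hlg0)
    have hsl : Real.sqrt x * lg ≤ 2 * x := by nlinarith [Real.sqrt_nonneg x]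
    have hksl : (k.sqrt:ℝ) * lg ≤ 2 * x := by
      have := mul_le_mul_of_nonneg_right hkssqrt (le_of_lt hlg0)
      linarith
    nlinarith
  -- step 6 : combine
  have hlogx1 : (0:ℝ) ≤ Real.log (x + 1) := Real.log_nonneg (by linarith)
  have hlogE0 : (0:ℝ) ≤ Real.log ((E:ℝ) + 1) := Real.log_nonneg (by linarith [Nat.cast_nonneg (α := ℝ) E])
  have hdiv : x / ((E:ℝ) + 1) ≤ 4 * x / lg ^ 2 := by
    have hpos : (0:ℝ) < lg ^ 2 / 4 := by positivity
    calc x / ((E:ℝ) + 1) ≤ x / (lg ^ 2 / 4) :=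
          div_le_div_of_nonneg_left (le_of_lt hx0) hpos hE1
      _ = 4 * x / lg ^ 2 := by rw [div_div_eq_mul_div]; ring
  have hterm1 : ((k / (E + 1) + 2 : ℕ) : ℝ) * Real.log (x + 1) ≤
      (4 * x / lg ^ 2 + 2) * Real.log (x + 1) := by
    apply mul_le_mul_of_nonneg_right _ hlogx1
    linarith
  have hterm2 : (P : ℝ) * Real.log ((E:ℝ) + 1) ≤
      (9 * x / lg) * (4 + 2 * Real.log lg) :=
    mul_le_mul hP9 hlogE (by positivity) (by positivity)
  have hmain : Real.log (x + 1) + Real.log (((k !).divisors.card : ℝ)) ≤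
      3 * Real.log (x + 1) + (4 * x / lg ^ 2) * Real.log (x + 1)
        + (9 * x / lg) * (4 + 2 * Real.log lg) := by
    have := h1
    nlinarith [hterm1, hterm2]
  have heq : x * (3 * (Real.log (x + 1) / x)
        + 4 * (Real.log (x + 1) / lg ^ 2)
        + 9 * ((4 + 2 * Real.log lg) / lg)) =
      3 * Real.log (x + 1) + (4 * x / lg ^ 2) * Real.log (x + 1)
        + (9 * x / lg) * (4 + 2 * Real.log lg) := by
    field_simp
  rw [heq]
  exact hmain

theorem exp_over_divisors_factorial_tendsto_atTop (a : ℝ) (ha : 1 < a)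
    (n : ℕ) (hn : 0 < n) :
    Tendsto (fun k : ℕ =>
        a ^ ((k : ℝ) / n) / ((k + 1) * ((k ! : ℕ).divisors.card)))
      atTop atTop := by
  have ha0 : (0:ℝ) < a := by linarith
  have hla : 0 < Real.log a := Real.log_pos ha
  have hc0 : 0 < Real.log a / (n:ℝ) := div_pos hla (by exact_mod_cast hn)
  have hdpos : ∀ k : ℕ, 0 < ((k !).divisors.card) := fun k =>
    Finset.card_pos.mpr ⟨k !, Nat.mem_divisors_self _ (Nat.factorial_ne_zero k)⟩
  have hN : Tendsto (fun k : ℕ => 3 * (Real.log ((k:ℝ) + 1) / k)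
      + 4 * (Real.log ((k:ℝ) + 1) / (Real.log k) ^ 2)
      + 9 * ((4 + 2 * Real.log (Real.log k)) / Real.log k)) atTop (nhds 0) := by
    have hreal : Tendsto (fun x : ℝ => 3 * (Real.log (x + 1) / x)
        + 4 * (Real.log (x + 1) / (Real.log x) ^ 2)
        + 9 * ((4 + 2 * Real.log (Real.log x)) / Real.log x)) atTop (nhds 0) := by
      have h := ((lim1.const_mul (3:ℝ)).add (lim2.const_mul (4:ℝ))).add (lim3.const_mul (9:ℝ))
      simpa using h
    exact hreal.comp tendsto_natCast_atTop_atTop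
  have hS : Tendsto (fun k : ℕ =>
      (Real.log ((k:ℝ) + 1) + Real.log (((k !).divisors.card : ℝ))) / k) atTop (nhds 0) := by
    apply tendsto_of_tendsto_of_tendsto_of_le_of_le' tendsto_const_nhds hN
    · filter_upwards [eventually_ge_atTop 1] with k hk
      have hk1 : (1:ℝ) ≤ (k:ℝ) := by exact_mod_cast hk
      have hd1 : (1:ℝ) ≤ ((k !).divisors.card : ℝ) := by exact_mod_cast hdpos k
      have h1 := Real.log_nonneg hd1
      have h2 := Real.log_nonneg (show (1:ℝ) ≤ (k:ℝ) + 1 by linarith)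
      apply div_nonneg (by linarith) (by linarith)
    · have hev2 : ∀ᶠ k : ℕ in atTop, 2 ≤ Real.log (k:ℝ) :=
        (Real.tendsto_log_atTop.comp tendsto_natCast_atTop_atTop).eventually_ge_atTop 2
      filter_upwards [eventually_ge_atTop 2, hev2] with k hk2 hlgk
      have hkey := key k hk2 hlgk
      have hx0 : (0:ℝ) < (k:ℝ) := by
        have : 0 < k := by omega
        exact_mod_cast this
      rw [div_le_iff₀ hx0, mul_comm]
      exact hkey
  have hmono : Tendsto (fun k : ℕ => (k:ℝ) *
      (Real.log a / n - (Real.log ((k:ℝ) + 1) + Real.log (((k !).divisors.card : ℝ))) / k))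
      atTop atTop := by
    have hg : Tendsto (fun k : ℕ =>
        Real.log a / n - (Real.log ((k:ℝ) + 1) + Real.log (((k !).divisors.card : ℝ))) / k)
        atTop (nhds (Real.log a / n)) := by
      have h := (tendsto_const_nhds (x := Real.log a / (n:ℝ))).sub hS
      rwa [sub_zero] at h
    exact Filter.Tendsto.atTop_mul_pos hc0 tendsto_natCast_atTop_atTop hg
  have hg : Tendsto (fun k : ℕ => (k:ℝ) / n * Real.log a -
      (Real.log ((k:ℝ) + 1) + Real.log (((k !).divisors.card : ℝ)))) atTop atTop := by
    apply hmono.congr'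
    filter_upwards [eventually_ge_atTop 1] with k hk
    have hk0 : ((k:ℝ)) ≠ 0 := by
      have : 0 < k := hk
      positivity
    field_simp
  have hexp := Real.tendsto_exp_atTop.comp hg
  apply hexp.congr
  intro k
  have hd0 : (0:ℝ) < ((k !).divisors.card : ℝ) := by exact_mod_cast hdpos k
  show Real.exp _ = _
  rw [Real.exp_sub, Real.exp_add,
    Real.exp_log (show (0:ℝ) < (k:ℝ) + 1 by positivity), Real.exp_log hd0,
    Real.rpow_def_of_pos ha0, mul_comm (Real.log a) ((k:ℝ) / n)]
end
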